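/- Let Φ : B(H_A) → B(H_B) be a quantum channel between finite-dimensional Hilbert spaces of equal dimension d, and suppose Φ is reversible with respect to a family {ρ_i}_{i=1}^d of mutually orthogonal pure states. Then {Φ(ρ_i)}_{i=1}^d is a family of mutually orthogonal pure states and Φ(I_{H_A}) = I_{H_B}. -/

import Mathlib

open Matrix
open scoped ComplexOrder
noncomputable section

abbrev Mat (n : ℕ) := Matrix (Fin n) (Fin n) ℂ

/-- Complete positivity of a linear map between matrix algebras:
all ampliations `id_k ⊗ Φ` map positive semidefinite matrices to positive
semidefinite matrices. -/
def IsCP {m n : Type*} [Fintype m] [Fintype n]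
    (Φ : Matrix m m ℂ →ₗ[ℂ] Matrix n n ℂ) : Prop :=
  ∀ (k : ℕ) (M : Matrix (Fin k × m) (Fin k × m) ℂ), M.PosSemidef →
    (Matrix.of fun p q : Fin k × n =>
      Φ (Matrix.of fun a b => M (p.1, a) (q.1, b)) p.2 q.2).PosSemidef

/-- Quantum channel: completely positive and trace preserving. -/
def IsChannel {m n : Type*} [Fintype m] [Fintype n]
    (Φ : Matrix m m ℂ →ₗ[ℂ] Matrix n n ℂ) : Prop :=
  IsCP Φ ∧ ∀ ρ : Matrix m m ℂ, (Φ ρ).trace = ρ.trace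

/-- A quantum state: positive semidefinite matrix of unit trace. -/
def IsState {n : Type*} [Fintype n] (ρ : Matrix n n ℂ) : Prop :=
  ρ.PosSemidef ∧ ρ.trace = 1

/-- Functional-calculus logarithm of a Hermitian matrix (with log 0 = 0 on the kernel). -/
def matLog {n : ℕ} (A : Mat n) : Mat n :=
  if h : A.IsHermitian then
    (h.eigenvectorUnitary : Mat n) *
      Matrix.diagonal (fun i => (Real.log (h.eigenvalues i) : ℂ)) *
      (star (h.eigenvectorUnitary : Mat n))
  else 0

/-- Quantum relative entropy  H(ρ‖σ) = Tr ρ (log ρ − log σ). -/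
def relEntropy {n : ℕ} (ρ σ : Mat n) : ℝ :=
  ((ρ * (matLog ρ - matLog σ)).trace).re

/-- von Neumann entropy. -/
def vnEntropy {n : Type*} [Fintype n] [DecidableEq n] (ρ : Matrix n n ℂ) : ℝ :=
  if h : ρ.IsHermitian then -∑ i, (h.eigenvalues i) * Real.log (h.eigenvalues i) else 0

/-- Partial trace over the second factor. -/
def ptrSnd {m k : Type*} [Fintype k] (M : Matrix (m × k) (m × k) ℂ) : Matrix m m ℂ :=
  Matrix.of fun a a' => ∑ b, M (a, b) (a', b)

/-- Partial trace over the first factor. -/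
def ptrFst {m k : Type*} [Fintype m] (M : Matrix (m × k) (m × k) ℂ) : Matrix k k ℂ :=
  Matrix.of fun b b' => ∑ a, M (a, b) (a, b')

def IsPureState {n : ℕ} (ρ : Mat n) : Prop :=
  ρ.PosSemidef ∧ ρ.trace = 1 ∧ ρ * ρ = ρ

/-! ### Auxiliary lemmas -/

namespace Matrix.PosSemidef

open scoped MatrixOrder

variable {n : Type*} [Fintype n] [DecidableEq n] {A : Matrix n n ℂ}

def sqrt (_hA : A.PosSemidef) : Matrix n n ℂ := CFC.sqrt A

lemma posSemidef_sqrt (hA : A.PosSemidef) : hA.sqrt.PosSemidef :=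
  (CFC.sqrt_nonneg A).posSemidef

lemma sqrt_mul_self (hA : A.PosSemidef) : hA.sqrt * hA.sqrt = A :=
  CFC.sqrt_mul_sqrt_self A hA.nonneg

end Matrix.PosSemidef

section Aux

set_option linter.unusedSectionVars false

variable {n : Type*} [Fintype n] [DecidableEq n]

lemma psd_diag_nonneg {C : Matrix n n ℂ} (hC : C.PosSemidef) (i : n) : 0 ≤ C i i := by
  exact hC.diag_nonneg

lemma psd_trace_nonneg {C : Matrix n n ℂ} (hC : C.PosSemidef) : 0 ≤ C.trace := by
  rw [Matrix.trace]
  exact Finset.sum_nonneg fun i _ => psd_diag_nonneg hC i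

lemma trace_mul_psd_nonneg {A B : Matrix n n ℂ} (hA : A.PosSemidef) (hB : B.PosSemidef) :
    0 ≤ (A * B).trace := by
  have hherm : hA.sqrtᴴ = hA.sqrt := hA.posSemidef_sqrt.1
  have h1 : A * B = hA.sqrt * (hA.sqrtᴴ * B) := by
    rw [hherm, ← mul_assoc, hA.sqrt_mul_self]
  rw [h1, Matrix.trace_mul_comm]
  exact psd_trace_nonneg (hB.conjTranspose_mul_mul_same _)

lemma psd_eq_zero_of_trace {C : Matrix n n ℂ} (hC : C.PosSemidef) (h : C.trace = 0) : C = 0 := by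
  have key : ∀ i, C i i = 0 := by
    have := (Finset.sum_eq_zero_iff_of_nonneg
      (fun i _ => psd_diag_nonneg hC i)).mp h
    intro i; exact this i (Finset.mem_univ i)
  have hherm : hC.sqrtᴴ = hC.sqrt := hC.posSemidef_sqrt.1
  have hCs : hC.sqrtᴴ * hC.sqrt = C := by rw [hherm, hC.sqrt_mul_self]
  have hz : hC.sqrt = 0 := by
    apply Matrix.ext
    intro i j
    have h0 : dotProduct (star (fun k => hC.sqrt k j)) (fun k => hC.sqrt k j) = 0 := by
      have : (hC.sqrtᴴ * hC.sqrt) j j = 0 := by rw [hCs]; exact key j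
      simpa [Matrix.mul_apply, dotProduct, Matrix.conjTranspose_apply] using this
    have := dotProduct_star_self_eq_zero.mp h0
    simpa using congr_fun this i
  rw [← hCs, hz, Matrix.mul_zero]

lemma psd_mul_eq_zero_of_trace {A B : Matrix n n ℂ} (hA : A.PosSemidef) (hB : B.PosSemidef)
    (h : (A * B).trace = 0) : A * B = 0 := by
  have hha : hA.sqrtᴴ = hA.sqrt := hA.posSemidef_sqrt.1
  have hhb : hB.sqrtᴴ = hB.sqrt := hB.posSemidef_sqrt.1
  have hD : (hA.sqrtᴴ * B * hA.sqrt).PosSemidef := hB.conjTranspose_mul_mul_same _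
  have htr : (hA.sqrtᴴ * B * hA.sqrt).trace = 0 := by
    rw [mul_assoc, Matrix.trace_mul_comm, mul_assoc, hha, hA.sqrt_mul_self,
      Matrix.trace_mul_comm]
    exact h
  have hD0 : hA.sqrtᴴ * B * hA.sqrt = 0 := psd_eq_zero_of_trace hD htr
  have h2 : (hB.sqrt * hA.sqrt)ᴴ * (hB.sqrt * hA.sqrt) = hA.sqrtᴴ * B * hA.sqrt := by
    rw [Matrix.conjTranspose_mul, hhb, mul_assoc, ← mul_assoc hB.sqrt, hB.sqrt_mul_self,
      ← mul_assoc]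
  have h3 : hB.sqrt * hA.sqrt = 0 :=
    Matrix.conjTranspose_mul_self_eq_zero.mp (h2.trans hD0)
  have h4 : hA.sqrt * hB.sqrt = 0 := by
    have := congrArg Matrix.conjTranspose h3
    simpa [Matrix.conjTranspose_mul, hha, hhb] using this
  calc A * B = hA.sqrt * (hA.sqrt * hB.sqrt) * hB.sqrt := by
        simp only [← mul_assoc]; rw [hA.sqrt_mul_self, mul_assoc, hB.sqrt_mul_self]
    _ = 0 := by rw [h4, Matrix.mul_zero, Matrix.zero_mul]

lemma cp_posSemidef {m : Type*} [Fintype m]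
    {Φ : Matrix m m ℂ →ₗ[ℂ] Matrix n n ℂ} (hΦ : IsCP Φ)
    {A : Matrix m m ℂ} (hA : A.PosSemidef) : (Φ A).PosSemidef := by
  have hM : (A.submatrix (Prod.snd : Fin 1 × m → m) Prod.snd).PosSemidef :=
    hA.submatrix _
  have h := hΦ 1 _ hM
  have heq : Φ A = (Matrix.of fun p q : Fin 1 × n =>
      Φ (Matrix.of fun a b => A.submatrix (Prod.snd : Fin 1 × m → m) Prod.snd (p.1, a) (q.1, b))
        p.2 q.2).submatrix (fun a => ((0 : Fin 1), a)) (fun a => ((0 : Fin 1), a)) := by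
    ext a b
    rfl
  rw [heq]
  exact h.submatrix _

lemma posSemidef_of_quadform {A : Matrix n n ℂ}
    (h : ∀ x : n → ℂ, 0 ≤ star x ⬝ᵥ A *ᵥ x) : A.PosSemidef := by
  have hreal : ∀ x : n → ℂ, (starRingEnd ℂ) (star x ⬝ᵥ A *ᵥ x) = star x ⬝ᵥ A *ᵥ x := by
    intro x
    have hx := h x
    rw [Complex.nonneg_iff] at hx
    apply Complex.conj_eq_iff_im.mpr
    exact hx.2.symm
  refine Matrix.PosSemidef.of_dotProduct_mulVec_nonneg ?_ h
  rw [Matrix.isHermitian_iff_isSymmetric]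
  rw [LinearMap.isSymmetric_iff_inner_map_self_real]
  intro v
  rw [EuclideanSpace.inner_eq_star_dotProduct]
  have hlin : (Matrix.toEuclideanLin A v).ofLp
      = A *ᵥ (v.ofLp) := by
    simp [Matrix.toEuclideanLin_apply]
  rw [hlin]
  set x : n → ℂ := v.ofLp
  have key : x ⬝ᵥ star (A *ᵥ x) = (starRingEnd ℂ) (star x ⬝ᵥ A *ᵥ x) := by
    simp [dotProduct, map_sum, mul_comm]
  rw [key, hreal]
  exact hreal x

lemma trace_vecMulVec (a b : n → ℂ) : (Matrix.vecMulVec a b).trace = b ⬝ᵥ a := by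
  simp [Matrix.trace, Matrix.diag, Matrix.vecMulVec_apply, dotProduct, mul_comm]

lemma mul_vecMulVec (M : Matrix n n ℂ) (a b : n → ℂ) :
    M * Matrix.vecMulVec a b = Matrix.vecMulVec (M *ᵥ a) b := by
  ext i j
  simp [Matrix.mul_apply, Matrix.vecMulVec_apply, Matrix.mulVec, dotProduct,
    Finset.sum_mul, mul_assoc]

lemma vecMulVec_mul_vecMulVec (a b c e : n → ℂ) :
    Matrix.vecMulVec a b * Matrix.vecMulVec c e = (b ⬝ᵥ c) • Matrix.vecMulVec a e := by
  ext i j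
  simp [Matrix.mul_apply, Matrix.vecMulVec_apply, dotProduct, Finset.mul_sum,
    Finset.sum_mul]
  ring_nf
  congr 1
  ext k
  ring

lemma vecMulVec_star_posSemidef (y : n → ℂ) : (Matrix.vecMulVec y (star y)).PosSemidef := by
  have : Matrix.vecMulVec y (star y) = Matrix.replicateCol (Fin 1) y * (Matrix.replicateCol (Fin 1) y)ᴴ := by
    ext i j
    simp [Matrix.vecMulVec_apply, Matrix.mul_apply, Matrix.col, Matrix.conjTranspose_apply]
  rw [this]
  exact Matrix.posSemidef_self_mul_conjTranspose _

lemma sum_vecMulVec_eq_one {d : ℕ} {u : Fin d → Fin d → ℂ}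
    (h : ∀ i j, star (u i) ⬝ᵥ u j = if i = j then 1 else 0) :
    ∑ i, Matrix.vecMulVec (u i) (star (u i)) = 1 := by
  set W : Matrix (Fin d) (Fin d) ℂ := Matrix.of fun a j => u j a with hW
  have h1 : Wᴴ * W = 1 := by
    ext i j
    have := h i j
    simpa [hW, Matrix.mul_apply, Matrix.conjTranspose_apply, dotProduct,
      Matrix.one_apply] using this
  have h2 : W * Wᴴ = 1 := mul_eq_one_comm.mp h1
  calc ∑ i, Matrix.vecMulVec (u i) (star (u i)) = W * Wᴴ := by
        ext a b
        simp [hW, Matrix.sum_apply, Matrix.vecMulVec_apply, Matrix.mul_apply,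
          Matrix.conjTranspose_apply]
    _ = 1 := h2

lemma exists_unit_eigenvector {A : Matrix n n ℂ} (hA : A.IsHermitian) (hA0 : A ≠ 0) :
    ∃ (u : n → ℂ) (t : ℝ), t ≠ 0 ∧ star u ⬝ᵥ u = 1 ∧ A *ᵥ u = (t : ℂ) • u := by
  obtain ⟨v, t, ht, hv, heig⟩ := hA.exists_eigenvector_of_ne_zero hA0
  have hnorm : star v ⬝ᵥ v = ((∑ a, Complex.normSq (v a) : ℝ) : ℂ) := by
    simp [dotProduct, Complex.normSq_eq_conj_mul_self]
  set r : ℝ := ∑ a, Complex.normSq (v a) with hr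
  have hrpos : 0 < r := by
    rcases lt_or_eq_of_le (Finset.sum_nonneg fun a _ => Complex.normSq_nonneg (v a)) with hlt|heq
    · exact hlt
    · exfalso
      apply hv
      funext a
      have := (Finset.sum_eq_zero_iff_of_nonneg
        (fun a _ => Complex.normSq_nonneg (v a))).mp heq.symm
      exact Complex.normSq_eq_zero.mp (this a (Finset.mem_univ a))
  set c : ℂ := (((Real.sqrt r)⁻¹ : ℝ) : ℂ)
  refine ⟨c • v, t, ht, ?_, ?_⟩
  · rw [star_smul, smul_dotProduct, dotProduct_smul, hnorm]
    rw [smul_smul]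
    have : star c * c = ((r⁻¹ : ℝ) : ℂ) := by
      simp only [c, Complex.star_def, Complex.conj_ofReal, ← Complex.ofReal_mul]
      congr 1
      rw [← mul_inv, Real.mul_self_sqrt (le_of_lt hrpos)]
    rw [this, smul_eq_mul, ← Complex.ofReal_mul]
    rw [inv_mul_cancel₀ (ne_of_gt hrpos)]
    norm_num
  · rw [Matrix.mulVec_smul, heig]
    funext a
    simp only [Pi.smul_apply, Complex.real_smul, smul_eq_mul]
    ring

lemma trace_pair {d : ℕ} (Ψ : Mat d →ₗ[ℂ] Mat d) (R : Mat d) (X : Mat d) :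
    ((Matrix.of fun a b => (R * Ψ (Matrix.single b a 1)).trace) * X).trace
      = (R * Ψ X).trace := by
  conv_rhs => rw [Matrix.matrix_eq_sum_single X]
  rw [map_sum, Finset.mul_sum, Matrix.trace_sum]
  conv_lhs => rw [Matrix.trace]
  simp only [Matrix.diag_apply, Matrix.mul_apply, Matrix.of_apply]
  rw [Finset.sum_comm]
  congr 1
  ext b
  rw [map_sum, Finset.mul_sum, Matrix.trace_sum]
  congr 1
  ext a
  have : Matrix.single b a (X b a) = X b a • Matrix.single b a 1 := by
    rw [Matrix.smul_single, smul_eq_mul, mul_one]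
  rw [this, _root_.map_smul, Matrix.mul_smul, Matrix.trace_smul, smul_eq_mul, mul_comm]

lemma quadform_eq_trace (A : Matrix n n ℂ) (y : n → ℂ) :
    star y ⬝ᵥ A *ᵥ y = (A * Matrix.vecMulVec y (star y)).trace := by
  rw [Matrix.trace]
  simp only [Matrix.diag_apply, Matrix.mul_apply, Matrix.vecMulVec_apply, Pi.star_apply]
  rw [dotProduct]
  simp only [Matrix.mulVec, dotProduct, Pi.star_apply]
  apply Finset.sum_congr rfl
  intro a _
  rw [Finset.mul_sum]
  apply Finset.sum_congr rfl
  intro b _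
  ring

lemma psd_sum {ι : Type*} (s : Finset ι) (f : ι → Matrix n n ℂ)
    (h : ∀ j ∈ s, (f j).PosSemidef) : (∑ j ∈ s, f j).PosSemidef := by
  classical
  induction s using Finset.induction_on with
  | empty => simpa using Matrix.PosSemidef.zero
  | insert _ _ hnotmem ih =>
    rw [Finset.sum_insert hnotmem]
    exact (h _ (Finset.mem_insert_self _ _)).add
      (ih fun j hj => h j (Finset.mem_insert_of_mem hj))

end Aux

/-- A channel between spaces of equal dimension `d` that is reversible
with respect to a complete family of `d` orthogonal pure states maps them to
orthogonal pure states and is unital. -/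
theorem outputs_pure_orthogonal_and_unital_of_reversible
    {d : ℕ}
    (Φ : Mat d →ₗ[ℂ] Mat d) (hΦ : IsChannel Φ)
    (v : Fin d → (Fin d → ℂ))
    (honb : ∀ i j, star (v i) ⬝ᵥ v j = if i = j then 1 else 0)
    (ρ : Fin d → Mat d)
    (hρ : ∀ i, ρ i = Matrix.vecMulVec (v i) (star (v i)))
    (Ψ : Mat d →ₗ[ℂ] Mat d) (hΨ : IsChannel Ψ)
    (hrev : ∀ i, Ψ (Φ (ρ i)) = ρ i) :
    (∀ i, IsPureState (Φ (ρ i))) ∧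
    (∀ i j, i ≠ j → (Φ (ρ i) * Φ (ρ j)).trace = 0) ∧
    Φ 1 = 1 := by
  classical
  obtain ⟨hΦcp, hΦtr⟩ := hΦ
  obtain ⟨hΨcp, hΨtr⟩ := hΨ
  have hρpsd : ∀ i, (ρ i).PosSemidef := fun i => by
    rw [hρ i]; exact vecMulVec_star_posSemidef _
  have hρtr : ∀ i, (ρ i).trace = 1 := fun i => by
    rw [hρ i, _root_.trace_vecMulVec]
    simpa using honb i i
  have hρsum : ∑ j, ρ j = 1 := by
    calc ∑ j, ρ j = ∑ j, Matrix.vecMulVec (v j) (star (v j)) := by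
          apply Finset.sum_congr rfl; intro j _; exact hρ j
      _ = 1 := sum_vecMulVec_eq_one honb
  have hΦpos : ∀ {A : Mat d}, A.PosSemidef → (Φ A).PosSemidef := fun h => cp_posSemidef hΦcp h
  have hΨpos : ∀ {A : Mat d}, A.PosSemidef → (Ψ A).PosSemidef := fun h => cp_posSemidef hΨcp h
  have hσpsd : ∀ i, (Φ (ρ i)).PosSemidef := fun i => hΦpos (hρpsd i)
  have hσtr : ∀ i, (Φ (ρ i)).trace = 1 := fun i => by rw [hΦtr]; exact hρtr i
  have hρmul : ∀ i j, (ρ i * ρ j).trace = if i = j then 1 else 0 := by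
    intro i j
    rw [hρ i, hρ j, _root_.vecMulVec_mul_vecMulVec, Matrix.trace_smul, _root_.trace_vecMulVec]
    rcases eq_or_ne i j with rfl|hne
    · have h1 := honb i i
      rw [if_pos rfl] at h1
      rw [h1, if_pos rfl]
      simp
    · have h1 := honb i j
      rw [if_neg hne] at h1
      rw [h1, if_neg hne]
      simp
  -- the dual POVM elements
  set M : Fin d → Mat d :=
    fun i => Matrix.of fun a b => (ρ i * Ψ (Matrix.single b a 1)).trace with hMdef
  have hpair : ∀ i (X : Mat d), (M i * X).trace = (ρ i * Ψ X).trace := fun i X =>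
    trace_pair Ψ (ρ i) X
  have hquad : ∀ i (y : Fin d → ℂ),
      star y ⬝ᵥ (M i) *ᵥ y = (ρ i * Ψ (Matrix.vecMulVec y (star y))).trace := by
    intro i y
    rw [quadform_eq_trace, hpair]
  have hMpsd : ∀ i, (M i).PosSemidef := by
    intro i
    apply posSemidef_of_quadform
    intro y
    rw [hquad]
    exact trace_mul_psd_nonneg (hρpsd i) (hΨpos (vecMulVec_star_posSemidef y))
  have h1Mpsd : ∀ i, ((1 : Mat d) - M i).PosSemidef := by
    intro i
    apply posSemidef_of_quadform
    intro y
    have hexp : star y ⬝ᵥ ((1 : Mat d) - M i) *ᵥ y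
        = star y ⬝ᵥ (1 : Mat d) *ᵥ y - star y ⬝ᵥ (M i) *ᵥ y := by
      rw [Matrix.sub_mulVec, dotProduct_sub]
    rw [hexp, hquad]
    have htr1 : star y ⬝ᵥ (1 : Mat d) *ᵥ y
        = ((1 : Mat d) * Ψ (Matrix.vecMulVec y (star y))).trace := by
      rw [Matrix.one_mulVec, one_mul, hΨtr, _root_.trace_vecMulVec]
    rw [htr1, ← Matrix.trace_sub, ← Matrix.sub_mul]
    apply trace_mul_psd_nonneg ?_ (hΨpos (vecMulVec_star_posSemidef y))
    have hsub : (1 : Mat d) - ρ i = ∑ j ∈ Finset.univ.erase i, ρ j := by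
      rw [← hρsum, ← Finset.add_sum_erase _ _ (Finset.mem_univ i)]
      rw [add_sub_cancel_left]
    rw [hsub]
    exact psd_sum _ _ fun j _ => hρpsd j
  have hkey : ∀ i j, (M i * Φ (ρ j)).trace = if i = j then 1 else 0 := by
    intro i j
    rw [hpair, hrev j]
    exact hρmul i j
  have hMσ : ∀ i, M i * Φ (ρ i) = Φ (ρ i) := by
    intro i
    have h0 : (((1 : Mat d) - M i) * Φ (ρ i)).trace = 0 := by
      rw [Matrix.sub_mul, Matrix.trace_sub, one_mul, hσtr i, hkey i i, if_pos rfl, sub_self]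
    have hz := psd_mul_eq_zero_of_trace (h1Mpsd i) (hσpsd i) h0
    rw [Matrix.sub_mul, one_mul, sub_eq_zero] at hz
    exact hz.symm
  have hMσ0 : ∀ i j, i ≠ j → M i * Φ (ρ j) = 0 := by
    intro i j hij
    apply psd_mul_eq_zero_of_trace (hMpsd i) (hσpsd j)
    rw [hkey i j, if_neg hij]
  have hσM : ∀ i, Φ (ρ i) * M i = Φ (ρ i) := by
    intro i
    have h := congrArg Matrix.conjTranspose (hMσ i)
    rwa [Matrix.conjTranspose_mul, (hσpsd i).1, (hMpsd i).1] at h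
  have horth : ∀ i j, i ≠ j → Φ (ρ i) * Φ (ρ j) = 0 := by
    intro i j hij
    calc Φ (ρ i) * Φ (ρ j) = Φ (ρ i) * (M i * Φ (ρ j)) := by
          rw [← mul_assoc, hσM i]
      _ = 0 := by rw [hMσ0 i j hij, Matrix.mul_zero]
  -- eigenvectors
  have hσne : ∀ i, Φ (ρ i) ≠ 0 := by
    intro i h
    have h1 := hσtr i
    rw [h, Matrix.trace_zero] at h1
    exact zero_ne_one h1
  have hex : ∀ i, ∃ (u : Fin d → ℂ) (t : ℝ), t ≠ 0 ∧ star u ⬝ᵥ u = 1 ∧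
      Φ (ρ i) *ᵥ u = (t : ℂ) • u := fun i =>
    exists_unit_eigenvector (hσpsd i).1 (hσne i)
  choose u t ht hunit heig using hex
  have htC : ∀ i, (t i : ℂ) ≠ 0 := fun i => by
    simpa using Complex.ofReal_ne_zero.mpr (ht i)
  have hu0 : ∀ i j, i ≠ j → Φ (ρ i) *ᵥ u j = 0 := by
    intro i j hij
    have h1 : Φ (ρ i) *ᵥ (Φ (ρ j) *ᵥ u j) = 0 := by
      rw [Matrix.mulVec_mulVec, horth i j hij, Matrix.zero_mulVec]
    rw [heig j, Matrix.mulVec_smul] at h1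
    rcases smul_eq_zero.mp h1 with h|h
    · exact absurd h (htC j)
    · exact h
  have huorth : ∀ i j, star (u i) ⬝ᵥ u j = if i = j then 1 else 0 := by
    intro i j
    rcases eq_or_ne i j with rfl|hij
    · rw [if_pos rfl]; exact hunit i
    · rw [if_neg hij]
      have h1 : star (Φ (ρ i) *ᵥ u i) ⬝ᵥ (Φ (ρ j) *ᵥ u j) = 0 := by
        rw [Matrix.star_mulVec, (hσpsd i).1, ← dotProduct_mulVec,
          Matrix.mulVec_mulVec, horth i j hij, Matrix.zero_mulVec, dotProduct_zero]
      rw [heig i, heig j, star_smul, smul_dotProduct, dotProduct_smul] at h1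
      have h2 : star ((t i : ℂ)) • ((t j : ℂ) • (star (u i) ⬝ᵥ u j)) = 0 := h1
      rcases smul_eq_zero.mp h2 with h|h
      · exact absurd h (by simpa [Complex.star_def, Complex.conj_ofReal]
          using Complex.ofReal_ne_zero.mpr (ht i))
      · rcases smul_eq_zero.mp h with h'|h'
        · exact absurd h' (htC j)
        · exact h'
  have hcomplete : ∑ j, Matrix.vecMulVec (u j) (star (u j)) = 1 := sum_vecMulVec_eq_one huorth
  have hσformula : ∀ i, Φ (ρ i) = (t i : ℂ) • Matrix.vecMulVec (u i) (star (u i)) := by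
    intro i
    have hz : ∀ j, j ≠ i → Matrix.vecMulVec (Φ (ρ i) *ᵥ u j) (star (u j)) = 0 := by
      intro j hj
      rw [hu0 i j (Ne.symm hj)]
      ext a b
      simp [Matrix.vecMulVec_apply]
    calc Φ (ρ i) = Φ (ρ i) * 1 := (mul_one _).symm
      _ = Φ (ρ i) * ∑ j, Matrix.vecMulVec (u j) (star (u j)) := by rw [hcomplete]
      _ = ∑ j, Φ (ρ i) * Matrix.vecMulVec (u j) (star (u j)) := Finset.mul_sum _ _ _
      _ = ∑ j, Matrix.vecMulVec (Φ (ρ i) *ᵥ u j) (star (u j)) := by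
          apply Finset.sum_congr rfl; intro j _; exact _root_.mul_vecMulVec _ _ _
      _ = Matrix.vecMulVec (Φ (ρ i) *ᵥ u i) (star (u i)) :=
          Finset.sum_eq_single i (fun j _ hj => hz j hj) (fun h => absurd (Finset.mem_univ i) h)
      _ = (t i : ℂ) • Matrix.vecMulVec (u i) (star (u i)) := by
          rw [heig i]
          ext a b
          simp [Matrix.vecMulVec_apply]
          ring
  have ht1 : ∀ i, (t i : ℂ) = 1 := by
    intro i
    have h1 : (Φ (ρ i)).trace = (t i : ℂ) * (star (u i) ⬝ᵥ u i) := by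
      rw [hσformula i, Matrix.trace_smul, _root_.trace_vecMulVec, smul_eq_mul]
    rw [hσtr i, hunit i, mul_one] at h1
    exact h1.symm
  have hσpure : ∀ i, Φ (ρ i) = Matrix.vecMulVec (u i) (star (u i)) := by
    intro i
    rw [hσformula i, ht1 i, one_smul]
  refine ⟨?_, ?_, ?_⟩
  · intro i
    refine ⟨hσpsd i, hσtr i, ?_⟩
    rw [hσpure i, _root_.vecMulVec_mul_vecMulVec, hunit i, one_smul]
  · intro i j hij
    rw [horth i j hij, Matrix.trace_zero]
  · have hstep : Φ 1 = ∑ j, Φ (ρ j) := by rw [← hρsum, map_sum]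
    rw [hstep]
    calc ∑ j, Φ (ρ j) = ∑ j, Matrix.vecMulVec (u j) (star (u j)) := by
          apply Finset.sum_congr rfl; intro j _; exact hσpure j
      _ = 1 := hcomplete

end
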